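/- arXiv:1810.12421 — 3 statements merged into one kernel-verified Lean document; each statement's English description precedes it below -/
import Mathlib

section
/- (Unstuck loadings) Let x : Fin N → EuclideanSpace ℝ (Fin d) be pairwise distinct points and let f : Fin N → EuclideanSpace ℝ (Fin d) be a balanced loading (∑ i, f i = 0 and ∑ i, (⟪f i, v⟫ * ⟪x i, w⟫ − ⟪x i, v⟫ * ⟪f i, w⟫) = 0 for all v, w). Suppose there exists α > 0 such that for every u : Fin N → EuclideanSpace ℝ (Fin d) that is balanced with respect to x (∑ i, u i = 0 and ∑ i, (⟪u i, v⟫ * ⟪x i, w⟫ − ⟪x i, v⟫ * ⟪u i, w⟫) = 0 for all v, w) and satisfies ⟪u i − u j, x i − x j⟫ ≥ 0 for all i, j, one has ∑ i, ⟪f i, u i⟫ ≥ α * ‖u‖ (where ‖u‖² = ∑ i, ‖u i‖²). Then there exists ε > 0 such that for every t with 0 ≤ t < ε there exists β > 0 such that: f is balanced with respect to the shifted points y i = x i − t • f i, and for every u : Fin N → EuclideanSpace ℝ (Fin d) that is balanced with respect to y and satisfies ⟪u i − u j, y i − y j⟫ ≥ 0 for all i, j, one has ∑ i, ⟪f i,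 u i⟫ ≥ β * ‖u‖. -/
open scoped InnerProductSpace BigOperators

lemma dist_to_ker {U V : Type*} [NormedAddCommGroup U] [InnerProductSpace ℝ U]
    [FiniteDimensional ℝ U] [NormedAddCommGroup V] [NormedSpace ℝ V]
    (T : U →ₗ[ℝ] V) :
    ∃ c > 0, ∀ u : U, ∃ k : U, T k = 0 ∧ ‖u - k‖ ≤ c * ‖T u‖ := by
  set K := LinearMap.ker T with hK
  set S : ↥Kᗮ →ₗ[ℝ] V := T ∘ₗ (Kᗮ).subtype with hSdef
  have hS : Function.Injective S := by
    intro a b hab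
    have h : T ((a : U) - b) = 0 := by
      simp only [hSdef, LinearMap.comp_apply, Submodule.subtype_apply] at hab
      rw [map_sub, hab, sub_self]
    have hmem : ((a : U) - b) ∈ K := h
    have hmem' : ((a : U) - b) ∈ Kᗮ := Kᗮ.sub_mem a.2 b.2
    have hz : ((a : U) - b) = 0 := by
      have := hmem' _ hmem
      rwa [inner_self_eq_zero] at this
    exact Subtype.ext (sub_eq_zero.mp hz)
  let e : ↥Kᗮ ≃L[ℝ] LinearMap.range S := (LinearEquiv.ofInjective S hS).toContinuousLinearEquiv
  set c : ℝ := ‖(e.symm : LinearMap.range S →L[ℝ] ↥Kᗮ)‖ + 1 with hc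
  have hc0 : 0 < c := by positivity
  refine ⟨c, hc0, fun u => ?_⟩
  set k : U := (K.orthogonalProjectionOnto u : U) with hk
  have hk0 : T k = 0 := (K.orthogonalProjectionOnto u).2
  refine ⟨k, hk0, ?_⟩
  have hmem : u - k ∈ Kᗮ := K.sub_starProjection_mem_orthogonal u
  set w : ↥Kᗮ := ⟨u - k, hmem⟩ with hw
  have hTw : S w = T u := by
    simp [hSdef, hw, map_sub, hk0]
  have h1 : ‖w‖ ≤ ‖(e.symm : LinearMap.range S →L[ℝ] ↥Kᗮ)‖ * ‖e w‖ := by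
    calc ‖w‖ = ‖e.symm (e w)‖ := by rw [e.symm_apply_apply]
    _ ≤ _ := (e.symm : LinearMap.range S →L[ℝ] ↥Kᗮ).le_opNorm _
  have hew : ‖(e w : V)‖ = ‖S w‖ := by
    have : ((e w : LinearMap.range S) : V) = S w := rfl
    rw [this]
  have : ‖w‖ ≤ c * ‖T u‖ := by
    have hn : ‖e w‖ = ‖S w‖ := by
      rw [← hew]; rfl
    rw [hn, hTw] at h1
    have := norm_nonneg (T u)
    nlinarith [norm_nonneg (e.symm : LinearMap.range S →L[ℝ] ↥Kᗮ)]
  simpa [hw] using this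

lemma coord_abs_le {d : ℕ} (a : EuclideanSpace ℝ (Fin d)) (k : Fin d) : |a k| ≤ ‖a‖ := by
  rw [EuclideanSpace.norm_eq]
  have h : |a k| = Real.sqrt ((a k)^2) := by rw [Real.sqrt_sq_eq_abs]
  rw [h]
  apply Real.sqrt_le_sqrt
  have := Finset.single_le_sum (f := fun i => (a i)^2) (fun i _ => sq_nonneg _) (Finset.mem_univ k)
  simpa [sq_abs] using this

lemma comp_norm_le {d N : ℕ} (u : PiLp 2 (fun _ : Fin N => EuclideanSpace ℝ (Fin d))) (i : Fin N) :
    ‖u i‖ ≤ ‖u‖ := by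
  have h : ‖u i‖ = Real.sqrt (‖u i‖^2) := (Real.sqrt_sq (norm_nonneg _)).symm
  rw [h, PiLp.norm_eq_of_L2 u]
  apply Real.sqrt_le_sqrt
  exact Finset.single_le_sum (f := fun j => ‖u j‖^2) (fun j _ => sq_nonneg _) (Finset.mem_univ i)

lemma bilin_expand {d N : ℕ} (a b : Fin N → EuclideanSpace ℝ (Fin d))
    (v w : EuclideanSpace ℝ (Fin d)) :
    ∑ i, (⟪a i, v⟫_ℝ * ⟪b i, w⟫_ℝ - ⟪b i, v⟫_ℝ * ⟪a i, w⟫_ℝ)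
      = ∑ k, ∑ l, v k * w l * (∑ i, (a i k * b i l - b i k * a i l)) := by
  simp only [PiLp.inner_apply, RCLike.inner_apply, conj_trivial]
  calc _
      = ∑ i, ∑ k, ∑ l, (v k * w l * (a i k * b i l - b i k * a i l)) := by
        refine Finset.sum_congr rfl fun i _ => ?_
        rw [Finset.sum_mul_sum, Finset.sum_mul_sum, ← Finset.sum_sub_distrib]
        refine Finset.sum_congr rfl fun k _ => ?_
        rw [← Finset.sum_sub_distrib]
        exact Finset.sum_congr rfl fun l _ => by ring
    _ = ∑ k, ∑ i, ∑ l, (v k * w l * (a i k * b i l - b i k * a i l)) := Finset.sum_comm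
    _ = ∑ k, ∑ l, ∑ i, (v k * w l * (a i k * b i l - b i k * a i l)) :=
        Finset.sum_congr rfl fun k _ => Finset.sum_comm
    _ = ∑ k, ∑ l, v k * w l * (∑ i, (a i k * b i l - b i k * a i l)) := by
        refine Finset.sum_congr rfl fun k _ => Finset.sum_congr rfl fun l _ => ?_
        rw [Finset.mul_sum]

noncomputable def Tmap {d N : ℕ} (z : Fin N → EuclideanSpace ℝ (Fin d)) :
    PiLp 2 (fun _ : Fin N => EuclideanSpace ℝ (Fin d)) →ₗ[ℝ]
      (EuclideanSpace ℝ (Fin d)) × (Fin d × Fin d → ℝ) where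
  toFun u := (∑ i, u i, fun p => ∑ i, (u i p.1 * z i p.2 - z i p.1 * u i p.2))
  map_add' u u' := by
    refine Prod.ext ?_ ?_
    · simp [Finset.sum_add_distrib]
    · funext p
      simp only [Prod.snd_add, Pi.add_apply]
      show ∑ i, ((u i p.1 + u' i p.1) * z i p.2 - z i p.1 * (u i p.2 + u' i p.2)) = _
      rw [← Finset.sum_add_distrib]
      exact Finset.sum_congr rfl fun i _ => by ring
  map_smul' r u := by
    refine Prod.ext ?_ ?_
    · simp [Finset.smul_sum]
    · funext p
      simp only [RingHom.id_apply, Prod.smul_snd, Pi.smul_apply, smul_eq_mul]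
      show ∑ i, (r * u i p.1 * z i p.2 - z i p.1 * (r * u i p.2)) = _
      rw [Finset.mul_sum]
      exact Finset.sum_congr rfl fun i _ => by ring

lemma Tmap_zero_of_balanced {d N : ℕ} (z u : Fin N → EuclideanSpace ℝ (Fin d))
    (h1 : ∑ i, u i = 0)
    (h2 : ∀ v w : EuclideanSpace ℝ (Fin d),
      ∑ i, (⟪u i, v⟫_ℝ * ⟪z i, w⟫_ℝ - ⟪z i, v⟫_ℝ * ⟪u i, w⟫_ℝ) = 0) :
    Tmap z (WithLp.toLp 2 u) = 0 := by
  refine Prod.ext h1 ?_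
  funext p
  have := h2 (EuclideanSpace.single p.1 1) (EuclideanSpace.single p.2 1)
  simp only [EuclideanSpace.inner_single_right, conj_trivial, one_mul] at this
  exact this

lemma balanced_of_Tmap_zero {d N : ℕ} (z u : Fin N → EuclideanSpace ℝ (Fin d))
    (h : Tmap z (WithLp.toLp 2 u) = 0) :
    ∑ i, u i = 0 ∧ ∀ v w : EuclideanSpace ℝ (Fin d),
      ∑ i, (⟪u i, v⟫_ℝ * ⟪z i, w⟫_ℝ - ⟪z i, v⟫_ℝ * ⟪u i, w⟫_ℝ) = 0 := by
  have h1 : (Tmap z (WithLp.toLp 2 u)).1 = 0 := by rw [h]; rfl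
  have h2 : (Tmap z (WithLp.toLp 2 u)).2 = 0 := by rw [h]; rfl
  refine ⟨h1, fun v w => ?_⟩
  rw [bilin_expand]
  have : ∀ p : Fin d × Fin d, ∑ i, (u i p.1 * z i p.2 - z i p.1 * u i p.2) = 0 :=
    fun p => congrFun h2 p
  refine Finset.sum_eq_zero fun k _ => Finset.sum_eq_zero fun l _ => ?_
  rw [this (k, l)]
  ring

def toL2 {d N : ℕ} (a : Fin N → EuclideanSpace ℝ (Fin d)) :
    PiLp 2 (fun _ : Fin N => EuclideanSpace ℝ (Fin d)) := WithLp.toLp 2 a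

lemma toL2_apply {d N : ℕ} (a : Fin N → EuclideanSpace ℝ (Fin d)) (i : Fin N) :
    toL2 a i = a i := rfl

lemma toL2_norm {d N : ℕ} (a : Fin N → EuclideanSpace ℝ (Fin d)) :
    ‖toL2 a‖ = Real.sqrt (∑ i, ‖a i‖ ^ 2) := by rw [PiLp.norm_eq_of_L2]; rfl

set_option maxHeartbeats 8000000 in
/-- **Unstuck loadings**: a loading in the interior (relative to the balanced
subspace) of the admissible loading cone at `x` remains in the interior of the
admissible loading cone when each point `x i` is pulled back to
`x i - t • f i`, for all small `t ≥ 0`. -/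
theorem interior_loading_unstuck (d N : ℕ)
    (x : Fin N → EuclideanSpace ℝ (Fin d)) (hx : Function.Injective x)
    (f : Fin N → EuclideanSpace ℝ (Fin d))
    (hf_bal : ∑ i, f i = 0 ∧
      ∀ v w : EuclideanSpace ℝ (Fin d),
        ∑ i, (⟪f i, v⟫_ℝ * ⟪x i, w⟫_ℝ - ⟪x i, v⟫_ℝ * ⟪f i, w⟫_ℝ) = 0)
    (α : ℝ) (hα : 0 < α)
    (hint : ∀ u : Fin N → EuclideanSpace ℝ (Fin d),
      (∑ i, u i = 0 ∧
        ∀ v w : EuclideanSpace ℝ (Fin d),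
          ∑ i, (⟪u i, v⟫_ℝ * ⟪x i, w⟫_ℝ - ⟪x i, v⟫_ℝ * ⟪u i, w⟫_ℝ) = 0) →
      (∀ i j : Fin N, ⟪u i - u j, x i - x j⟫_ℝ ≥ 0) →
      ∑ i, ⟪f i, u i⟫_ℝ ≥ α * Real.sqrt (∑ i, ‖u i‖ ^ 2)) :
    ∃ ε > 0, ∀ t : ℝ, 0 ≤ t → t < ε →
      ∃ β > 0,
        ((∑ i, f i = 0 ∧
          ∀ v w : EuclideanSpace ℝ (Fin d),
            ∑ i, (⟪f i, v⟫_ℝ * ⟪x i - t • f i, w⟫_ℝ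
              - ⟪x i - t • f i, v⟫_ℝ * ⟪f i, w⟫_ℝ) = 0) ∧
        ∀ u : Fin N → EuclideanSpace ℝ (Fin d),
          (∑ i, u i = 0 ∧
            ∀ v w : EuclideanSpace ℝ (Fin d),
              ∑ i, (⟪u i, v⟫_ℝ * ⟪x i - t • f i, w⟫_ℝ
                - ⟪x i - t • f i, v⟫_ℝ * ⟪u i, w⟫_ℝ) = 0) →
          (∀ i j : Fin N,
            ⟪u i - u j, (x i - t • f i) - (x j - t • f j)⟫_ℝ ≥ 0) →
          ∑ i, ⟪f i, u i⟫_ℝ ≥ β * Real.sqrt (∑ i, ‖u i‖ ^ 2)) := by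
  classical
  -- balance of f is preserved for every t
  have hbal : ∀ (t : ℝ) (v w : EuclideanSpace ℝ (Fin d)),
      ∑ i, (⟪f i, v⟫_ℝ * ⟪x i - t • f i, w⟫_ℝ
        - ⟪x i - t • f i, v⟫_ℝ * ⟪f i, w⟫_ℝ) = 0 := by
    intro t v w
    calc ∑ i, (⟪f i, v⟫_ℝ * ⟪x i - t • f i, w⟫_ℝ
          - ⟪x i - t • f i, v⟫_ℝ * ⟪f i, w⟫_ℝ)
        = ∑ i, (⟪f i, v⟫_ℝ * ⟪x i, w⟫_ℝ - ⟪x i, v⟫_ℝ * ⟪f i, w⟫_ℝ) := by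
          refine Finset.sum_congr rfl fun i _ => ?_
          rw [inner_sub_left, inner_sub_left, real_inner_smul_left, real_inner_smul_left]
          ring
      _ = 0 := hf_bal.2 v w
  -- degenerate case N ≤ 1
  by_cases hN : N < 2
  · refine ⟨1, one_pos, fun t ht htlt => ⟨1, one_pos, ⟨⟨hf_bal.1, hbal t⟩, ?_⟩⟩⟩
    intro u hu _
    have hzero : ∀ i, u i = 0 := by
      intro i
      have hsub : Subsingleton (Fin N) := by
        rw [Fin.subsingleton_iff_le_one]; omega
      have : u i = ∑ j, u j := by
        rw [Finset.sum_eq_single i (fun b _ hb => absurd (Subsingleton.elim b i) hb)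
          (fun h => absurd (Finset.mem_univ i) h)]
      rw [this, hu.1]
    simp [hzero]
  push_neg at hN
  -- main case: N ≥ 2
  obtain ⟨c, hc0, hcker⟩ := dist_to_ker (Tmap x)
  obtain ⟨F, hF⟩ : ∃ y : ℝ, y = ‖toL2 f‖ + 1 := ⟨_, rfl⟩
  have hF1 : 1 ≤ F := by have := norm_nonneg (toL2 f); linarith
  have hF0 : 0 < F := by linarith
  have hFi : ∀ i, ‖f i‖ ≤ F := fun i => le_trans (comp_norm_le (toL2 f) i) (by linarith)
  obtain ⟨R, hR⟩ : ∃ y : ℝ, y = ‖toL2 x‖ + 1 := ⟨_, rfl⟩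
  have hR0 : 0 < R := by have := norm_nonneg (toL2 x); linarith
  have hRi : ∀ i, ‖x i‖ ≤ R := fun i => le_trans (comp_norm_le (toL2 x) i) (by linarith)
  have hN0 : (0:ℝ) < N := by exact_mod_cast (by omega : 0 < N)
  obtain ⟨C, hC⟩ : ∃ y : ℝ, y = 2 * N * F := ⟨_, rfl⟩
  have hC0 : 0 < C := by rw [hC]; exact mul_pos (mul_pos two_pos hN0) hF0
  -- minimal squared distance
  have hod : (Finset.univ.offDiag : Finset (Fin N × Fin N)).Nonempty := by
    refine ⟨(⟨0, by omega⟩, ⟨1, by omega⟩), ?_⟩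
    simp only [Finset.mem_offDiag, Finset.mem_univ, true_and]
    intro h
    have := congrArg Fin.val h
    simp at this
  obtain ⟨p₀, hp₀mem, hp₀min⟩ := Finset.exists_min_image
    (Finset.univ.offDiag) (fun p : Fin N × Fin N => ‖x p.1 - x p.2‖ ^ 2) hod
  obtain ⟨δ, hδ⟩ : ∃ y : ℝ, y = ‖x p₀.1 - x p₀.2‖ ^ 2 := ⟨_, rfl⟩
  have hδ0 : 0 < δ := by
    rw [hδ]
    rw [Finset.mem_offDiag] at hp₀mem
    have hne : x p₀.1 ≠ x p₀.2 := fun h => hp₀mem.2.2 (hx h)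
    exact pow_pos (norm_pos_iff.mpr (sub_ne_zero.mpr hne)) 2
  have hδle : ∀ i j : Fin N, i ≠ j → δ ≤ ‖x i - x j‖ ^ 2 := by
    intro i j hij
    rw [hδ]
    exact hp₀min (i, j) (by simp [Finset.mem_offDiag, hij])
  -- the dilation loading
  have hNne : (N : ℝ) ≠ 0 := ne_of_gt hN0
  obtain ⟨cen, hcen⟩ : ∃ y : EuclideanSpace ℝ (Fin d), y = (N : ℝ)⁻¹ • ∑ m, x m := ⟨_, rfl⟩
  have hgker : Tmap x (toL2 (fun i => x i - cen)) = 0 := by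
    have hS : ∀ k : Fin d, (∑ m, x m) k = ∑ m, x m k := fun k =>
      by rw [WithLp.ofLp_sum]; exact Finset.sum_apply k Finset.univ fun m => x m
    have hcenk : ∀ k : Fin d, cen k = (N : ℝ)⁻¹ * (∑ m, x m k) := by
      intro k
      rw [hcen]
      show (N : ℝ)⁻¹ * (∑ m, x m) k = _
      rw [hS]
    refine Prod.ext ?_ ?_
    · show ∑ i, (x i - cen) = 0
      rw [Finset.sum_sub_distrib, Finset.sum_const, Finset.card_univ, Fintype.card_fin,
        hcen, ← Nat.cast_smul_eq_nsmul ℝ, smul_smul, mul_inv_cancel₀ hNne, one_smul, sub_self]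
    · funext p
      show ∑ i, ((x i - cen) p.1 * x i p.2 - x i p.1 * ((x i - cen) p.2)) = 0
      have hsub : ∀ (i : Fin N) (k : Fin d), (x i - cen) k = x i k - cen k := fun i k => rfl
      calc ∑ i, ((x i - cen) p.1 * x i p.2 - x i p.1 * ((x i - cen) p.2))
          = ∑ i, (x i p.1 * cen p.2 - cen p.1 * x i p.2) := by
            refine Finset.sum_congr rfl fun i _ => ?_
            rw [hsub, hsub]; ring
        _ = cen p.2 * (∑ i, x i p.1) - cen p.1 * (∑ i, x i p.2) := by
            rw [Finset.sum_sub_distrib, ← Finset.sum_mul, ← Finset.mul_sum]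
            ring
        _ = 0 := by rw [hcenk, hcenk]; ring
  have hgsub : ∀ i j : Fin N, (x i - cen) - (x j - cen) = x i - x j := fun i j => by module
  -- constants
  obtain ⟨G, hG⟩ : ∃ y : ℝ, y = ‖toL2 (fun i => x i - cen)‖ := ⟨_, rfl⟩
  have hG0 : 0 ≤ G := hG ▸ norm_nonneg _
  have hRcC : 0 ≤ 4 * R * c * C := by
    have h1 : (0:ℝ) ≤ 4 * R := by linarith
    exact mul_nonneg (mul_nonneg h1 hc0.le) hC0.le
  obtain ⟨s, hs⟩ : ∃ y : ℝ, y = (4 * F + 4 * R * c * C) / δ := ⟨_, rfl⟩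
  have hs0 : 0 ≤ s := by
    rw [hs]
    exact div_nonneg (by linarith) hδ0.le
  obtain ⟨K₁, hK₁⟩ : ∃ y : ℝ, y = c * C + s * G + 1 := ⟨_, rfl⟩
  have hK₁1 : 1 ≤ K₁ := by
    have h1 : 0 ≤ c * C := mul_nonneg hc0.le hC0.le
    have h2 : 0 ≤ s * G := mul_nonneg hs0 hG0
    rw [hK₁]; linarith
  have hK₁0 : 0 < K₁ := by linarith
  have hαF : (0:ℝ) < (α + F) * K₁ := mul_pos (by linarith) hK₁0
  obtain ⟨ε, hε⟩ : ∃ y : ℝ, y = α / (2 * ((α + F) * K₁)) := ⟨_, rfl⟩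
  have hε0 : 0 < ε := by
    rw [hε]
    exact div_pos hα (mul_pos two_pos hαF)
  refine ⟨ε, hε0, fun t ht htlt => ⟨α / 2, half_pos hα, ⟨⟨hf_bal.1, hbal t⟩, ?_⟩⟩⟩
  intro u hu hucone
  have htC : (0:ℝ) ≤ t * C := mul_nonneg ht hC0.le
  -- step 1 : bound ‖Tmap x u‖
  have hyt : ∀ (i : Fin N) (k : Fin d), (x i - t • f i) k = x i k - t * f i k :=
    fun i k => rfl
  have hTy0 : Tmap (fun i => x i - t • f i) (toL2 u) = 0 :=
    Tmap_zero_of_balanced _ u hu.1 hu.2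
  have hTy2 : ∀ p : Fin d × Fin d,
      ∑ i, (u i p.1 * (x i - t • f i) p.2 - (x i - t • f i) p.1 * u i p.2) = 0 := by
    intro p
    have h0 : (Tmap (fun i => x i - t • f i) (toL2 u)).2 = 0 := by rw [hTy0]; rfl
    exact congrFun h0 p
  have huC : ∀ i, ‖u i‖ ≤ ‖toL2 u‖ := fun i => comp_norm_le (toL2 u) i
  have hTx_entry : ∀ p : Fin d × Fin d,
      |∑ i, (u i p.1 * x i p.2 - x i p.1 * u i p.2)| ≤ t * C * ‖toL2 u‖ := by
    intro p
    have hsplit : ∑ i, (u i p.1 * x i p.2 - x i p.1 * u i p.2)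
        = t * ∑ i, (u i p.1 * f i p.2 - f i p.1 * u i p.2) := by
      have h0 := hTy2 p
      have h1 : ∑ i, (u i p.1 * x i p.2 - x i p.1 * u i p.2)
          = (∑ i, (u i p.1 * (x i - t • f i) p.2 - (x i - t • f i) p.1 * u i p.2))
            + t * ∑ i, (u i p.1 * f i p.2 - f i p.1 * u i p.2) := by
        rw [Finset.mul_sum, ← Finset.sum_add_distrib]
        refine Finset.sum_congr rfl fun i _ => ?_
        rw [hyt, hyt]; ring
      rw [h1, h0, zero_add]
    rw [hsplit, abs_mul, abs_of_nonneg ht]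
    have habs : |∑ i, (u i p.1 * f i p.2 - f i p.1 * u i p.2)| ≤ C * ‖toL2 u‖ := by
      calc |∑ i, (u i p.1 * f i p.2 - f i p.1 * u i p.2)|
          ≤ ∑ i, |u i p.1 * f i p.2 - f i p.1 * u i p.2| := Finset.abs_sum_le_sum_abs _ _
        _ ≤ ∑ _i : Fin N, 2 * F * ‖toL2 u‖ := by
            refine Finset.sum_le_sum fun i _ => ?_
            have h1 : |u i p.1| ≤ ‖toL2 u‖ := le_trans (coord_abs_le (u i) p.1) (huC i)
            have h2 : |u i p.2| ≤ ‖toL2 u‖ := le_trans (coord_abs_le (u i) p.2) (huC i)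
            have h3 : |f i p.1| ≤ F := le_trans (coord_abs_le (f i) p.1) (hFi i)
            have h4 : |f i p.2| ≤ F := le_trans (coord_abs_le (f i) p.2) (hFi i)
            have e1 : |u i p.1 * f i p.2 - f i p.1 * u i p.2|
                ≤ |u i p.1| * |f i p.2| + |f i p.1| * |u i p.2| := by
              calc |u i p.1 * f i p.2 - f i p.1 * u i p.2|
                  ≤ |u i p.1 * f i p.2| + |f i p.1 * u i p.2| := abs_sub _ _
                _ = |u i p.1| * |f i p.2| + |f i p.1| * |u i p.2| := by
                    rw [abs_mul, abs_mul]
            have hu0 : (0:ℝ) ≤ ‖toL2 u‖ := norm_nonneg _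
            have m1 : |u i p.1| * |f i p.2| ≤ ‖toL2 u‖ * F :=
              mul_le_mul h1 h4 (abs_nonneg _) hu0
            have m2 : |f i p.1| * |u i p.2| ≤ F * ‖toL2 u‖ :=
              mul_le_mul h3 h2 (abs_nonneg _) hF0.le
            linarith
        _ = N * (2 * F * ‖toL2 u‖) := by
            rw [Finset.sum_const, Finset.card_univ, Fintype.card_fin, nsmul_eq_mul]
        _ = C * ‖toL2 u‖ := by rw [hC]; ring
    calc t * |∑ i, (u i p.1 * f i p.2 - f i p.1 * u i p.2)| ≤ t * (C * ‖toL2 u‖) :=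
          mul_le_mul_of_nonneg_left habs ht
      _ = t * C * ‖toL2 u‖ := by ring
  have hTxu : ‖Tmap x (toL2 u)‖ ≤ t * C * ‖toL2 u‖ := by
    rw [Prod.norm_def]
    have hrhs : (0:ℝ) ≤ t * C * ‖toL2 u‖ := mul_nonneg htC (norm_nonneg _)
    refine max_le ?_ ?_
    · have h0 : (Tmap x (toL2 u)).1 = 0 := hu.1
      rw [h0, norm_zero]; exact hrhs
    · rw [pi_norm_le_iff_of_nonneg hrhs]
      intro p
      have := hTx_entry p
      rwa [Real.norm_eq_abs]
  -- step 2 : project to the balanced space at x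
  obtain ⟨k₀, hk₀ker, hk₀close⟩ := hcker (toL2 u)
  have hk₀close' : ‖toL2 u - k₀‖ ≤ c * (t * C * ‖toL2 u‖) :=
    le_trans hk₀close (mul_le_mul_of_nonneg_left hTxu (le_of_lt hc0))
  -- step 3 : push into the cone
  have hkker : Tmap x (k₀ + (t * s * ‖toL2 u‖) • toL2 (fun i => x i - cen)) = 0 := by
    rw [map_add, map_smul, hk₀ker, hgker, smul_zero, add_zero]
  have hkbal := balanced_of_Tmap_zero x _ hkker
  have hkapp : ∀ i, (k₀ + (t * s * ‖toL2 u‖) • toL2 (fun i => x i - cen)) i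
      = k₀ i + (t * s * ‖toL2 u‖) • (x i - cen) := fun i => rfl
  have hkcone : ∀ i j : Fin N,
      ⟪(k₀ + (t * s * ‖toL2 u‖) • toL2 (fun i => x i - cen)) i
        - (k₀ + (t * s * ‖toL2 u‖) • toL2 (fun i => x i - cen)) j, x i - x j⟫_ℝ ≥ 0 := by
    intro i j
    by_cases hij : i = j
    · subst hij; simp
    · have hxij : ‖x i - x j‖ ≤ 2 * R := by
        calc ‖x i - x j‖ ≤ ‖x i‖ + ‖x j‖ := norm_sub_le _ _
          _ ≤ 2 * R := by have := hRi i; have := hRi j; linarith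
      rw [hkapp, hkapp]
      have hrw : k₀ i + (t * s * ‖toL2 u‖) • (x i - cen)
            - (k₀ j + (t * s * ‖toL2 u‖) • (x j - cen))
          = (k₀ i - k₀ j) + (t * s * ‖toL2 u‖) • ((x i - cen) - (x j - cen)) := by
        module
      rw [hrw, hgsub, inner_add_left, real_inner_smul_left, real_inner_self_eq_norm_sq]
      have hk₀d : ⟪k₀ i - k₀ j, x i - x j⟫_ℝ
          ≥ ⟪u i - u j, x i - x j⟫_ℝ - 4 * R * (c * (t * C * ‖toL2 u‖)) := by
        have hdiff : (u i - u j) - (k₀ i - k₀ j) = (toL2 u - k₀) i - (toL2 u - k₀) j := by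
          simp only [PiLp.sub_apply, toL2_apply]
          abel
        have h1 : ⟪(toL2 u - k₀) i - (toL2 u - k₀) j, x i - x j⟫_ℝ
            = ⟪u i - u j, x i - x j⟫_ℝ - ⟪k₀ i - k₀ j, x i - x j⟫_ℝ := by
          rw [← hdiff]; exact inner_sub_left _ _ _
        have h2 : ⟪(toL2 u - k₀) i - (toL2 u - k₀) j, x i - x j⟫_ℝ
            ≤ ‖(toL2 u - k₀) i - (toL2 u - k₀) j‖ * ‖x i - x j‖ := real_inner_le_norm _ _
        have h3 : ‖(toL2 u - k₀) i - (toL2 u - k₀) j‖ ≤ 2 * ‖toL2 u - k₀‖ := by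
          calc ‖(toL2 u - k₀) i - (toL2 u - k₀) j‖
              ≤ ‖(toL2 u - k₀) i‖ + ‖(toL2 u - k₀) j‖ := norm_sub_le _ _
            _ ≤ 2 * ‖toL2 u - k₀‖ := by
                have := comp_norm_le (toL2 u - k₀) i
                have := comp_norm_le (toL2 u - k₀) j
                linarith
        have h4 : ‖(toL2 u - k₀) i - (toL2 u - k₀) j‖ * ‖x i - x j‖
            ≤ (2 * (c * (t * C * ‖toL2 u‖))) * (2 * R) := by
          apply mul_le_mul
          · exact le_trans h3 (by linarith)
          · exact hxij
          · exact norm_nonneg _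
          · have h5 : (0:ℝ) ≤ c * (t * C * ‖toL2 u‖) :=
              mul_nonneg hc0.le (mul_nonneg htC (norm_nonneg _))
            linarith
        linarith
      have hucone' : ⟪u i - u j, x i - x j⟫_ℝ ≥ - (4 * F * (t * ‖toL2 u‖)) := by
        have hxy : x i - x j = ((x i - t • f i) - (x j - t • f j)) + t • (f i - f j) := by
          module
        have h5 : ⟪u i - u j, x i - x j⟫_ℝ
            = ⟪u i - u j, (x i - t • f i) - (x j - t • f j)⟫_ℝ
              + t * ⟪u i - u j, f i - f j⟫_ℝ := by
          rw [hxy, inner_add_right, real_inner_smul_right]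
        have h6 : |⟪u i - u j, f i - f j⟫_ℝ| ≤ (2 * ‖toL2 u‖) * (2 * F) := by
          calc |⟪u i - u j, f i - f j⟫_ℝ| ≤ ‖u i - u j‖ * ‖f i - f j‖ :=
                abs_real_inner_le_norm _ _
            _ ≤ (2 * ‖toL2 u‖) * (2 * F) := by
                apply mul_le_mul
                · calc ‖u i - u j‖ ≤ ‖u i‖ + ‖u j‖ := norm_sub_le _ _
                    _ ≤ 2 * ‖toL2 u‖ := by have := huC i; have := huC j; linarith
                · calc ‖f i - f j‖ ≤ ‖f i‖ + ‖f j‖ := norm_sub_le _ _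
                    _ ≤ 2 * F := by have := hFi i; have := hFi j; linarith
                · exact norm_nonneg _
                · positivity
        have h7 := hucone i j
        have h8 : - ((2 * ‖toL2 u‖) * (2 * F)) ≤ ⟪u i - u j, f i - f j⟫_ℝ :=
          neg_le_of_abs_le h6
        have h9 : t * (- ((2 * ‖toL2 u‖) * (2 * F))) ≤ t * ⟪u i - u j, f i - f j⟫_ℝ :=
          mul_le_mul_of_nonneg_left h8 ht
        rw [h5]
        have h10 : t * (- ((2 * ‖toL2 u‖) * (2 * F))) = - (4 * F * (t * ‖toL2 u‖)) := by ring
        linarith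
      have hδij := hδle i j hij
      have hsδ : s * δ = 4 * F + 4 * R * c * C := by
        rw [hs, div_mul_cancel₀ _ (ne_of_gt hδ0)]
      have hterm : (t * s * ‖toL2 u‖) * ‖x i - x j‖ ^ 2 ≥ (t * ‖toL2 u‖) * (s * δ) := by
        have h9 : (0:ℝ) ≤ t * ‖toL2 u‖ := mul_nonneg ht (norm_nonneg _)
        have h10 : s * δ ≤ s * ‖x i - x j‖ ^ 2 := mul_le_mul_of_nonneg_left hδij hs0
        calc (t * s * ‖toL2 u‖) * ‖x i - x j‖ ^ 2
            = (t * ‖toL2 u‖) * (s * ‖x i - x j‖ ^ 2) := by ring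
          _ ≥ (t * ‖toL2 u‖) * (s * δ) := mul_le_mul_of_nonneg_left h10 h9
      rw [hsδ] at hterm
      linarith
  -- step 4 : apply the interior hypothesis to k
  have hhint := hint (fun i => (k₀ + (t * s * ‖toL2 u‖) • toL2 (fun i => x i - cen)) i)
    hkbal hkcone
  have hknorm : Real.sqrt (∑ i, ‖(k₀ + (t * s * ‖toL2 u‖) • toL2 (fun i => x i - cen)) i‖ ^ 2)
      = ‖k₀ + (t * s * ‖toL2 u‖) • toL2 (fun i => x i - cen)‖ :=
    (PiLp.norm_eq_of_L2 _).symm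
  rw [hknorm] at hhint
  -- step 5 : conclude
  have hku : ‖(k₀ + (t * s * ‖toL2 u‖) • toL2 (fun i => x i - cen)) - toL2 u‖
      ≤ K₁ * (t * ‖toL2 u‖) := by
    have h11 : (k₀ + (t * s * ‖toL2 u‖) • toL2 (fun i => x i - cen)) - toL2 u
        = (k₀ - toL2 u) + (t * s * ‖toL2 u‖) • toL2 (fun i => x i - cen) := by module
    calc ‖(k₀ + (t * s * ‖toL2 u‖) • toL2 (fun i => x i - cen)) - toL2 u‖
        ≤ ‖k₀ - toL2 u‖ + ‖(t * s * ‖toL2 u‖) • toL2 (fun i => x i - cen)‖ := by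
          rw [h11]; exact norm_add_le _ _
      _ = ‖toL2 u - k₀‖ + (t * s * ‖toL2 u‖) * G := by
          rw [norm_sub_rev, norm_smul, Real.norm_eq_abs,
            abs_of_nonneg (mul_nonneg (mul_nonneg ht hs0) (norm_nonneg _)), hG]
      _ ≤ c * (t * C * ‖toL2 u‖) + (t * s * ‖toL2 u‖) * G := by linarith
      _ ≤ K₁ * (t * ‖toL2 u‖) := by
          rw [hK₁]
          have h12 : (0:ℝ) ≤ t * ‖toL2 u‖ := mul_nonneg ht (norm_nonneg _)
          linarith
  have hsum : ∑ i, ⟪f i, u i⟫_ℝ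
      = ∑ i, ⟪f i, (k₀ + (t * s * ‖toL2 u‖) • toL2 (fun i => x i - cen)) i⟫_ℝ
        - ⟪toL2 f, (k₀ + (t * s * ‖toL2 u‖) • toL2 (fun i => x i - cen)) - toL2 u⟫_ℝ := by
    rw [PiLp.inner_apply]
    have h13 : ∀ i,
        ⟪toL2 f i, ((k₀ + (t * s * ‖toL2 u‖) • toL2 (fun i => x i - cen)) - toL2 u) i⟫_ℝ
        = ⟪f i, (k₀ + (t * s * ‖toL2 u‖) • toL2 (fun i => x i - cen)) i⟫_ℝ
          - ⟪f i, u i⟫_ℝ := by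
      intro i
      have h14 : ((k₀ + (t * s * ‖toL2 u‖) • toL2 (fun i => x i - cen)) - toL2 u) i
          = (k₀ + (t * s * ‖toL2 u‖) • toL2 (fun i => x i - cen)) i - u i := rfl
      rw [h14, inner_sub_right]
      rfl
    simp_rw [h13]
    rw [Finset.sum_sub_distrib]
    ring
  have hCS : ⟪toL2 f, (k₀ + (t * s * ‖toL2 u‖) • toL2 (fun i => x i - cen)) - toL2 u⟫_ℝ
      ≤ F * ‖(k₀ + (t * s * ‖toL2 u‖) • toL2 (fun i => x i - cen)) - toL2 u‖ := by
    calc ⟪toL2 f, (k₀ + (t * s * ‖toL2 u‖) • toL2 (fun i => x i - cen)) - toL2 u⟫_ℝ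
        ≤ ‖toL2 f‖ * ‖(k₀ + (t * s * ‖toL2 u‖) • toL2 (fun i => x i - cen)) - toL2 u‖ :=
          real_inner_le_norm _ _
      _ ≤ F * ‖(k₀ + (t * s * ‖toL2 u‖) • toL2 (fun i => x i - cen)) - toL2 u‖ := by
          have h15 := norm_nonneg ((k₀ + (t * s * ‖toL2 u‖) • toL2 (fun i => x i - cen)) - toL2 u)
          have h16 : ‖toL2 f‖ * ‖(k₀ + (t * s * ‖toL2 u‖) • toL2 (fun i => x i - cen)) - toL2 u‖
              ≤ F * ‖(k₀ + (t * s * ‖toL2 u‖) • toL2 (fun i => x i - cen)) - toL2 u‖ := by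
            apply mul_le_mul_of_nonneg_right _ h15
            rw [hF]; linarith
          linarith
  have hknormge : ‖k₀ + (t * s * ‖toL2 u‖) • toL2 (fun i => x i - cen)‖
      ≥ ‖toL2 u‖ - ‖(k₀ + (t * s * ‖toL2 u‖) • toL2 (fun i => x i - cen)) - toL2 u‖ := by
    have h12 : ‖toL2 u‖ - ‖k₀ + (t * s * ‖toL2 u‖) • toL2 (fun i => x i - cen)‖
        ≤ ‖(k₀ + (t * s * ‖toL2 u‖) • toL2 (fun i => x i - cen)) - toL2 u‖ := by
      calc ‖toL2 u‖ - ‖k₀ + (t * s * ‖toL2 u‖) • toL2 (fun i => x i - cen)‖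
          ≤ ‖toL2 u - (k₀ + (t * s * ‖toL2 u‖) • toL2 (fun i => x i - cen))‖ :=
            norm_sub_norm_le _ _
        _ = ‖(k₀ + (t * s * ‖toL2 u‖) • toL2 (fun i => x i - cen)) - toL2 u‖ :=
            norm_sub_rev _ _
    linarith
  have hunorm : Real.sqrt (∑ i, ‖u i‖ ^ 2) = ‖toL2 u‖ := (toL2_norm u).symm
  rw [hunorm]
  -- final arithmetic
  have hεle : (α + F) * K₁ * t ≤ α / 2 := by
    have h16 := htlt
    rw [hε, lt_div_iff₀ (mul_pos two_pos hαF)] at h16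
    linarith
  have hun0 : (0:ℝ) ≤ ‖toL2 u‖ := norm_nonneg _
  have hku0 : (0:ℝ) ≤ ‖(k₀ + (t * s * ‖toL2 u‖) • toL2 (fun i => x i - cen)) - toL2 u‖ :=
    norm_nonneg _
  calc ∑ i, ⟪f i, u i⟫_ℝ
      = ∑ i, ⟪f i, (k₀ + (t * s * ‖toL2 u‖) • toL2 (fun i => x i - cen)) i⟫_ℝ
        - ⟪toL2 f, (k₀ + (t * s * ‖toL2 u‖) • toL2 (fun i => x i - cen)) - toL2 u⟫_ℝ := hsum
    _ ≥ α * ‖k₀ + (t * s * ‖toL2 u‖) • toL2 (fun i => x i - cen)‖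
        - F * ‖(k₀ + (t * s * ‖toL2 u‖) • toL2 (fun i => x i - cen)) - toL2 u‖ := by
        linarith
    _ ≥ α * ‖toL2 u‖
        - (α + F) * ‖(k₀ + (t * s * ‖toL2 u‖) • toL2 (fun i => x i - cen)) - toL2 u‖ := by
        have h17 : α * (‖toL2 u‖ - ‖(k₀ + (t * s * ‖toL2 u‖) • toL2 (fun i => x i - cen)) - toL2 u‖)
            ≤ α * ‖k₀ + (t * s * ‖toL2 u‖) • toL2 (fun i => x i - cen)‖ :=
          mul_le_mul_of_nonneg_left hknormge hα.le
        linarith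
    _ ≥ α * ‖toL2 u‖ - (α + F) * (K₁ * (t * ‖toL2 u‖)) := by
        have h18 : (α + F) * ‖(k₀ + (t * s * ‖toL2 u‖) • toL2 (fun i => x i - cen)) - toL2 u‖
            ≤ (α + F) * (K₁ * (t * ‖toL2 u‖)) :=
          mul_le_mul_of_nonneg_left hku (by linarith)
        linarith
    _ ≥ (α / 2) * ‖toL2 u‖ := by
        have h19 : (α + F) * K₁ * t * ‖toL2 u‖ ≤ (α / 2) * ‖toL2 u‖ :=
          mul_le_mul_of_nonneg_right hεle hun0
        linarith
end

section
/- (The five wires problem) In E = EuclideanSpace ℝ (Fin 3), let v₁, …, v₅ be unit vectors with v₁, v₂, v₃ linearly independent and v₅ = −v₄, and let T₁, …, T₅ > 0 satisfy the balance condition ∑_{i=1}^{5} Tᵢ • vᵢ = 0. Then there exist t₁, …, t₅ > 0 and strictly positive tensions τ₁₄, τ₂₄, τ₃₄, τ₁₅, τ₂₅, τ₃₅ such that, setting yᵢ = tᵢ • vᵢ, the points y₁, …, y₅ are pairwise distinct and each node is in equilibrium: for i = 1, 2, 3, Tᵢ • vᵢ + τᵢ₄ • (y₄ − yᵢ)/‖y₄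 − yᵢ‖ + τᵢ₅ • (y₅ − yᵢ)/‖y₅ − yᵢ‖ = 0; T₄ • v₄ + ∑_{i=1}^{3} τᵢ₄ • (yᵢ − y₄)/‖yᵢ − y₄‖ = 0; and T₅ • v₅ + ∑_{i=1}^{3} τᵢ₅ • (yᵢ − y₅)/‖yᵢ − y₅‖ = 0. -/
set_option maxHeartbeats 2000000 in

/-- **The five wires problem**: a junction of five wires under tension at the
origin, with directions `v₁, v₂, v₃` independent and `v₅ = -v₄`, can be
replaced by a localized web in which at most four wires meet at each node,
all bars under strictly positive tension. -/
theorem five_wires_problem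
    (v1 v2 v3 v4 v5 : EuclideanSpace ℝ (Fin 3))
    (hv1 : ‖v1‖ = 1) (hv2 : ‖v2‖ = 1) (hv3 : ‖v3‖ = 1)
    (hv4 : ‖v4‖ = 1) (hv5 : ‖v5‖ = 1)
    (hindep : LinearIndependent ℝ ![v1, v2, v3])
    (h45 : v5 = -v4)
    (T1 T2 T3 T4 T5 : ℝ)
    (hT1 : 0 < T1) (hT2 : 0 < T2) (hT3 : 0 < T3) (hT4 : 0 < T4) (hT5 : 0 < T5)
    (hbal : T1 • v1 + T2 • v2 + T3 • v3 + T4 • v4 + T5 • v5 = 0) :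
    ∃ t1 t2 t3 t4 t5 : ℝ,
      0 < t1 ∧ 0 < t2 ∧ 0 < t3 ∧ 0 < t4 ∧ 0 < t5 ∧
      Function.Injective
        ![t1 • v1, t2 • v2, t3 • v3, t4 • v4, t5 • v5] ∧
      ∃ τ14 τ24 τ34 τ15 τ25 τ35 : ℝ,
        0 < τ14 ∧ 0 < τ24 ∧ 0 < τ34 ∧ 0 < τ15 ∧ 0 < τ25 ∧ 0 < τ35 ∧
        (T1 • v1
          + τ14 • (‖t4 • v4 - t1 • v1‖⁻¹ • (t4 • v4 - t1 • v1))
          + τ15 • (‖t5 • v5 - t1 • v1‖⁻¹ • (t5 • v5 - t1 • v1)) = 0) ∧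
        (T2 • v2
          + τ24 • (‖t4 • v4 - t2 • v2‖⁻¹ • (t4 • v4 - t2 • v2))
          + τ25 • (‖t5 • v5 - t2 • v2‖⁻¹ • (t5 • v5 - t2 • v2)) = 0) ∧
        (T3 • v3
          + τ34 • (‖t4 • v4 - t3 • v3‖⁻¹ • (t4 • v4 - t3 • v3))
          + τ35 • (‖t5 • v5 - t3 • v3‖⁻¹ • (t5 • v5 - t3 • v3)) = 0) ∧
        (T4 • v4
          + τ14 • (‖t1 • v1 - t4 • v4‖⁻¹ • (t1 • v1 - t4 • v4))
          + τ24 • (‖t2 • v2 - t4 • v4‖⁻¹ • (t2 • v2 - t4 • v4))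
          + τ34 • (‖t3 • v3 - t4 • v4‖⁻¹ • (t3 • v3 - t4 • v4)) = 0) ∧
        (T5 • v5
          + τ15 • (‖t1 • v1 - t5 • v5‖⁻¹ • (t1 • v1 - t5 • v5))
          + τ25 • (‖t2 • v2 - t5 • v5‖⁻¹ • (t2 • v2 - t5 • v5))
          + τ35 • (‖t3 • v3 - t5 • v5‖⁻¹ • (t3 • v3 - t5 • v5)) = 0) := by
  subst h45
  have hv4ne : v4 ≠ 0 := by intro h; rw [h, norm_zero] at hv4; norm_num at hv4
  have hkey : T1 • v1 + T2 • v2 + T3 • v3 = (T5 - T4) • v4 := by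
    linear_combination (norm := module) hbal
  have hS : (0:ℝ) < T1 + T2 + T3 := by positivity
  have hQ : (0:ℝ) < T4 + T5 := by positivity
  have hind3 : ∀ a b c : ℝ, a • v1 + b • v2 + c • v3 = 0 → a = 0 ∧ b = 0 ∧ c = 0 := by
    intro a b c h
    have := Fintype.linearIndependent_iff.mp hindep ![a, b, c] ?_
    · exact ⟨this 0, this 1, this 2⟩
    · simpa [Fin.sum_univ_three] using h
  -- v4 not parallel to any of v1, v2, v3
  have hpar1 : ∀ d : ℝ, v4 ≠ d • v1 := by
    intro d h
    have hk := hkey; rw [h] at hk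
    have h0 : (T1 - (T5 - T4)*d) • v1 + T2 • v2 + T3 • v3 = 0 := by
      linear_combination (norm := module) hk
    exact absurd (hind3 _ _ _ h0).2.1 hT2.ne'
  have hpar2 : ∀ d : ℝ, v4 ≠ d • v2 := by
    intro d h
    have hk := hkey; rw [h] at hk
    have h0 : T1 • v1 + (T2 - (T5 - T4)*d) • v2 + T3 • v3 = 0 := by
      linear_combination (norm := module) hk
    exact absurd (hind3 _ _ _ h0).1 hT1.ne'
  have hpar3 : ∀ d : ℝ, v4 ≠ d • v3 := by
    intro d h
    have hk := hkey; rw [h] at hk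
    have h0 : T1 • v1 + T2 • v2 + (T3 - (T5 - T4)*d) • v3 = 0 := by
      linear_combination (norm := module) hk
    exact absurd (hind3 _ _ _ h0).1 hT1.ne'
  -- nonvanishing of differences
  have hgen : ∀ (w : EuclideanSpace ℝ (Fin 3)), (∀ d : ℝ, v4 ≠ d • w) →
      ∀ c s : ℝ, c ≠ 0 → c • v4 - s • w ≠ 0 := by
    intro w hw c s hc h
    apply hw (c⁻¹ * s)
    have h' : c • v4 = s • w := sub_eq_zero.mp h
    calc v4 = c⁻¹ • (c • v4) := by rw [smul_smul, inv_mul_cancel₀ hc, one_smul]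
      _ = c⁻¹ • (s • w) := by rw [h']
      _ = (c⁻¹ * s) • w := smul_smul _ _ _
  set S := T1 + T2 + T3 with hSdef
  set Q := T4 + T5 with hQdef
  have hQne : Q ≠ 0 := hQ.ne'
  have hQne' : -Q ≠ 0 := neg_ne_zero.mpr hQ.ne'
  have hz41 : Q • v4 - S • v1 ≠ 0 := hgen v1 hpar1 Q S hQne
  have hz42 : Q • v4 - S • v2 ≠ 0 := hgen v2 hpar2 Q S hQne
  have hz43 : Q • v4 - S • v3 ≠ 0 := hgen v3 hpar3 Q S hQne
  have conv : ∀ w : EuclideanSpace ℝ (Fin 3), Q • (-v4) - S • w = (-Q) • v4 - S • w := by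
    intro w; rw [smul_neg, neg_smul]
  have hz51 : Q • (-v4) - S • v1 ≠ 0 := by rw [conv]; exact hgen v1 hpar1 (-Q) S hQne'
  have hz52 : Q • (-v4) - S • v2 ≠ 0 := by rw [conv]; exact hgen v2 hpar2 (-Q) S hQne'
  have hz53 : Q • (-v4) - S • v3 ≠ 0 := by rw [conv]; exact hgen v3 hpar3 (-Q) S hQne'
  have hn41 : ‖Q • v4 - S • v1‖ ≠ 0 := norm_ne_zero_iff.mpr hz41
  have hn42 : ‖Q • v4 - S • v2‖ ≠ 0 := norm_ne_zero_iff.mpr hz42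
  have hn43 : ‖Q • v4 - S • v3‖ ≠ 0 := norm_ne_zero_iff.mpr hz43
  have hn51 : ‖Q • (-v4) - S • v1‖ ≠ 0 := norm_ne_zero_iff.mpr hz51
  have hn52 : ‖Q • (-v4) - S • v2‖ ≠ 0 := norm_ne_zero_iff.mpr hz52
  have hn53 : ‖Q • (-v4) - S • v3‖ ≠ 0 := norm_ne_zero_iff.mpr hz53
  -- pairwise distinctness
  have h12 : S • v1 ≠ S • v2 := by
    intro h
    have h0 : S • v1 + (-S) • v2 + (0:ℝ) • v3 = 0 := by
      rw [neg_smul, h]; module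
    exact absurd (hind3 _ _ _ h0).1 hS.ne'
  have h13 : S • v1 ≠ S • v3 := by
    intro h
    have h0 : S • v1 + (0:ℝ) • v2 + (-S) • v3 = 0 := by
      rw [neg_smul, h]; module
    exact absurd (hind3 _ _ _ h0).1 hS.ne'
  have h23 : S • v2 ≠ S • v3 := by
    intro h
    have h0 : (0:ℝ) • v1 + S • v2 + (-S) • v3 = 0 := by
      rw [neg_smul, h]; module
    exact absurd (hind3 _ _ _ h0).2.1 hS.ne'
  have h14 : S • v1 ≠ Q • v4 := fun h => hz41 (by rw [h]; exact sub_self _)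
  have h24 : S • v2 ≠ Q • v4 := fun h => hz42 (by rw [h]; exact sub_self _)
  have h34 : S • v3 ≠ Q • v4 := fun h => hz43 (by rw [h]; exact sub_self _)
  have h15 : S • v1 ≠ Q • (-v4) := fun h => hz51 (by rw [h]; exact sub_self _)
  have h25 : S • v2 ≠ Q • (-v4) := fun h => hz52 (by rw [h]; exact sub_self _)
  have h35 : S • v3 ≠ Q • (-v4) := fun h => hz53 (by rw [h]; exact sub_self _)
  have h45' : Q • v4 ≠ Q • (-v4) := by
    intro h
    rw [smul_neg, eq_neg_iff_add_eq_zero, ← two_smul ℝ] at h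
    rw [smul_smul] at h
    exact hv4ne (by simpa [smul_eq_zero, hQ.ne'] using h)
  have hinj : Function.Injective ![S • v1, S • v2, S • v3, Q • v4, Q • (-v4)] := by
    intro i j hij
    fin_cases i <;> fin_cases j <;>
      simp only [Matrix.cons_val_zero, Matrix.cons_val_one, Matrix.head_cons,
        Matrix.cons_val_two, Matrix.tail_cons, Matrix.cons_val_three,
        Matrix.cons_val_four, Matrix.cons_val_fin_one] at hij <;>
      first
        | rfl
        | exact absurd hij h12 | exact absurd hij h12.symm
        | exact absurd hij h13 | exact absurd hij h13.symm
        | exact absurd hij h23 | exact absurd hij h23.symm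
        | exact absurd hij h14 | exact absurd hij h14.symm
        | exact absurd hij h24 | exact absurd hij h24.symm
        | exact absurd hij h34 | exact absurd hij h34.symm
        | exact absurd hij h15 | exact absurd hij h15.symm
        | exact absurd hij h25 | exact absurd hij h25.symm
        | exact absurd hij h35 | exact absurd hij h35.symm
        | exact absurd hij h45' | exact absurd hij h45'.symm
  refine ⟨S, S, S, Q, Q, hS, hS, hS, hQ, hQ, hinj,
    T1/(2*S) * ‖Q • v4 - S • v1‖, T2/(2*S) * ‖Q • v4 - S • v2‖,
    T3/(2*S) * ‖Q • v4 - S • v3‖,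
    T1/(2*S) * ‖Q • (-v4) - S • v1‖, T2/(2*S) * ‖Q • (-v4) - S • v2‖,
    T3/(2*S) * ‖Q • (-v4) - S • v3‖,
    mul_pos (by positivity) ((norm_ne_zero_iff.mpr hz41).lt_of_le' (norm_nonneg _)),
    mul_pos (by positivity) ((norm_ne_zero_iff.mpr hz42).lt_of_le' (norm_nonneg _)),
    mul_pos (by positivity) ((norm_ne_zero_iff.mpr hz43).lt_of_le' (norm_nonneg _)),
    mul_pos (by positivity) ((norm_ne_zero_iff.mpr hz51).lt_of_le' (norm_nonneg _)),
    mul_pos (by positivity) ((norm_ne_zero_iff.mpr hz52).lt_of_le' (norm_nonneg _)),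
    mul_pos (by positivity) ((norm_ne_zero_iff.mpr hz53).lt_of_le' (norm_nonneg _)),
    ?_, ?_, ?_, ?_, ?_⟩
  · rw [smul_smul, smul_smul, mul_inv_cancel_right₀ hn41, mul_inv_cancel_right₀ hn51]
    rw [hSdef, hQdef]
    match_scalars <;> field_simp <;> ring
  · rw [smul_smul, smul_smul, mul_inv_cancel_right₀ hn42, mul_inv_cancel_right₀ hn52]
    rw [hSdef, hQdef]
    match_scalars <;> field_simp <;> ring
  · rw [smul_smul, smul_smul, mul_inv_cancel_right₀ hn43, mul_inv_cancel_right₀ hn53]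
    rw [hSdef, hQdef]
    match_scalars <;> field_simp <;> ring
  · rw [norm_sub_rev (S • v1) (Q • v4), norm_sub_rev (S • v2) (Q • v4),
      norm_sub_rev (S • v3) (Q • v4),
      smul_smul, smul_smul, smul_smul,
      mul_inv_cancel_right₀ hn41, mul_inv_cancel_right₀ hn42,
      mul_inv_cancel_right₀ hn43]
    rw [hSdef, hQdef]
    linear_combination (norm := match_scalars <;> field_simp <;> ring) (2:ℝ)⁻¹ • hkey
  · rw [norm_sub_rev (S • v1) (Q • (-v4)), norm_sub_rev (S • v2) (Q • (-v4)),
      norm_sub_rev (S • v3) (Q • (-v4)),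
      smul_smul, smul_smul, smul_smul,
      mul_inv_cancel_right₀ hn51, mul_inv_cancel_right₀ hn52,
      mul_inv_cancel_right₀ hn53]
    rw [hSdef, hQdef]
    linear_combination (norm := match_scalars <;> field_simp <;> ring) (2:ℝ)⁻¹ • hkey
end

section
/- Let x₀ ∈ EuclideanSpace ℝ (Fin d), let x : Fin N → EuclideanSpace ℝ (Fin d), let c : Fin N → ℝ with c i > 0 for all i, and define the radial loading f i = c i • (x i − x₀). Assume the loading is balanced: ∑ i, f i = 0. Then the tension coefficients λ i j = (c i * c j) / (∑ k, c k) are nonnegative, symmetric, and satisfy the equilibrium conditions f i + ∑ j, (λ i j) • (x j − x i) = 0 for every i. (The web connecting the terminal points pairwise supports any balanced radial loading.) -/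
open scoped BigOperators

/-- The web connecting the terminal points pairwise supports any balanced
radial loading `f i = c i • (x i - x₀)`, with tension coefficients
`λ i j = c i * c j / ∑ k, c k`. -/
theorem pairwise_web_supports_radial_loading (d N : ℕ)
    (x₀ : EuclideanSpace ℝ (Fin d))
    (x : Fin N → EuclideanSpace ℝ (Fin d))
    (c : Fin N → ℝ) (hc : ∀ i, 0 < c i)
    (f : Fin N → EuclideanSpace ℝ (Fin d))
    (hf : ∀ i, f i = c i • (x i - x₀))
    (hbal : ∑ i, f i = 0) :
    (∀ i j : Fin N, 0 ≤ (c i * c j) / (∑ k, c k)) ∧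
    (∀ i j : Fin N, (c i * c j) / (∑ k, c k) = (c j * c i) / (∑ k, c k)) ∧
    (∀ i : Fin N,
      f i + ∑ j, ((c i * c j) / (∑ k, c k)) • (x j - x i) = 0) := by
  refine ⟨fun i j => div_nonneg (mul_nonneg (hc i).le (hc j).le)
      (Finset.sum_nonneg fun k _ => (hc k).le),
    fun i j => by ring_nf, fun i => ?_⟩
  have hS : (0 : ℝ) < ∑ k, c k := by
    have : (0:ℕ) < N := Fin.pos i
    exact Finset.sum_pos (fun k _ => hc k) (by simp [Finset.univ_nonempty_iff, ← Fin.pos_iff_nonempty, this])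
  have hbal' : ∑ j, c j • x j = (∑ k, c k) • x₀ := by
    have h1 : ∑ j, (c j • x j - c j • x₀) = 0 := by
      rw [← hbal]
      exact Finset.sum_congr rfl fun j _ => by rw [hf j, smul_sub]
    rw [Finset.sum_sub_distrib, sub_eq_zero] at h1
    rw [h1, Finset.sum_smul]
  have key : ∑ j, ((c i * c j) / (∑ k, c k)) • (x j - x i)
      = (c i / (∑ k, c k)) • ∑ j, c j • (x j - x i) := by
    rw [Finset.smul_sum]
    exact Finset.sum_congr rfl fun j _ => by rw [smul_smul, div_mul_eq_mul_div]
  have key2 : ∑ j, c j • (x j - x i) = (∑ k, c k) • (x₀ - x i) := by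
    have : ∀ j, c j • (x j - x i) = c j • x j - c j • x i := fun j => smul_sub _ _ _
    simp only [this]
    rw [Finset.sum_sub_distrib, hbal', ← Finset.sum_smul, ← smul_sub]
  rw [key, key2, smul_smul, div_mul_cancel₀ _ hS.ne', hf i, smul_sub, smul_sub]
  abel
end
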